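/- Let R be a commutative ring and m, r ∈ R. For all natural numbers n and ℓ, the r-Dowling numbers satisfy the Spivey-type formula: D_{m,r}(n+ℓ) = \sum_{j=0}^{ℓ} \sum_{k=0}^{n} W_{m,r}(ℓ,j) * C(n,k) * (m*j + r)^{n-k} * D_{m,0}(k). (This is the q → 1, x = 1 specialization (result3) of the paper's main result.) -/

import Mathlib

/-- The r-Whitney numbers of the second kind. -/
def rWhitney {R : Type*} [CommRing R] (m r : R) : ℕ → ℕ → R
  | 0, 0 => 1
  | 0, _ + 1 => 0
  | n + 1, 0 => r * rWhitney m r n 0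
  | n + 1, k + 1 =>
      rWhitney m r n k + (m * ((k : R) + 1) + r) * rWhitney m r n (k + 1)

/-- The r-Dowling numbers. -/
def rDowling {R : Type*} [CommRing R] (m r : R) (n : ℕ) : R :=
  ∑ k ∈ Finset.range (n + 1), rWhitney m r n k

section SpiveyAux

open Finset

variable {R : Type*} [CommRing R]

/-- integer-indexed Whitney numbers -/
def rWhitneyZ (m r : R) (n : ℕ) (k : ℤ) : R :=
  if 0 ≤ k then rWhitney m r n k.toNat else 0

lemma rWhitneyZ_coe (m r : R) (n : ℕ) (k : ℕ) :
    rWhitneyZ m r n (k : ℤ) = rWhitney m r n k := by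
  simp [rWhitneyZ]

lemma rWhitneyZ_zero_row (m r : R) (k : ℤ) :
    rWhitneyZ m r 0 k = if k = 0 then 1 else 0 := by
  rcases k with a | a
  · cases a with
    | zero => simp [rWhitneyZ, rWhitney]
    | succ b =>
      rw [show (Int.ofNat (b+1)) = ((b+1:ℕ):ℤ) from rfl, rWhitneyZ_coe,
        if_neg (by exact_mod_cast Nat.succ_ne_zero b)]
      rfl
  · simp [rWhitneyZ]

lemma rWhitneyZ_succ (m r : R) (n : ℕ) (k : ℤ) :
    rWhitneyZ m r (n + 1) k
      = rWhitneyZ m r n (k - 1) + (m * (k : R) + r) * rWhitneyZ m r n k := by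
  rcases k with a | a
  · cases a with
    | zero =>
      show rWhitneyZ m r (n+1) 0 = rWhitneyZ m r n (-1) + _
      simp [rWhitneyZ, rWhitney]
    | succ b =>
      show rWhitneyZ m r (n+1) ((b:ℤ)+1) = rWhitneyZ m r n (((b:ℤ)+1) - 1) + _
      rw [add_sub_cancel_right]
      rw [show ((b:ℤ)+1) = ((b+1 : ℕ) : ℤ) by push_cast; ring]
      rw [show (Int.ofNat (b+1)) = (((b:ℕ)+1:ℕ):ℤ) from by simp]
      rw [rWhitneyZ_coe, rWhitneyZ_coe, rWhitneyZ_coe]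
      rw [show rWhitney m r (n+1) (b+1)
          = rWhitney m r n b + (m * ((b : R) + 1) + r) * rWhitney m r n (b + 1) from rfl]
      push_cast
      ring
  · have h1 : Int.negSucc a < 0 := Int.negSucc_lt_zero a
    have h2 : Int.negSucc a - 1 < 0 := by omega
    simp only [rWhitneyZ, if_neg (not_le.mpr h1), if_neg (not_le.mpr h2), mul_zero, add_zero]

lemma rWhitney_eq_zero (m r : R) : ∀ n k, n < k → rWhitney m r n k = 0 := by
  intro n
  induction n with
  | zero => intro k hk; obtain ⟨k, rfl⟩ := Nat.exists_eq_add_of_lt hk; simp [rWhitney]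
  | succ n ih =>
    intro k hk
    obtain ⟨j, rfl⟩ : ∃ j, k = j + 1 := ⟨k - 1, by omega⟩
    show rWhitney m r n j + (m * ((j : R) + 1) + r) * rWhitney m r n (j + 1) = 0
    rw [ih j (by omega), ih (j+1) (by omega)]
    ring

lemma sum_range_add' (f : ℕ → R) (a b : ℕ) :
    ∑ t ∈ range (a + b), f t = (∑ t ∈ range a, f t) + ∑ t ∈ range b, f (a + t) := by
  induction b with
  | zero => simp
  | succ b ih =>
    rw [show a + (b + 1) = (a + b) + 1 from rfl, sum_range_succ, ih, sum_range_succ, add_assoc]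

lemma sum_whitney_head (m : R) (k M : ℕ) (h : k + 1 ≤ M) :
    ∑ t ∈ range M, rWhitney m 0 k t = rDowling m 0 k := by
  obtain ⟨d, rfl⟩ := Nat.exists_eq_add_of_le h
  clear h
  induction d with
  | zero => simp [rDowling]
  | succ d ih =>
    rw [show k + 1 + (d + 1) = (k + 1 + d) + 1 from rfl, sum_range_succ,
      rWhitney_eq_zero m 0 k (k + 1 + d) (by omega), add_zero, ih]

lemma keyA (m r : R) (ℓ : ℕ) : ∀ (n : ℕ) (t : ℤ),
    rWhitneyZ m r (n + ℓ) t =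
      ∑ j ∈ range (ℓ + 1), ∑ k ∈ range (n + 1),
        rWhitney m r ℓ j * (n.choose k : R) * (m * (j : R) + r) ^ (n - k) *
          rWhitneyZ m 0 k (t - (j : ℤ)) := by
  intro n
  induction n with
  | zero =>
    intro t
    rw [zero_add]
    rcases le_or_gt 0 t with ht | ht
    · obtain ⟨a, rfl⟩ := Int.eq_ofNat_of_zero_le ht
      have hcongr : ∀ j ∈ range (ℓ + 1),
          (∑ k ∈ range (0 + 1), rWhitney m r ℓ j * ((0:ℕ).choose k : R)
              * (m * (j : R) + r) ^ (0 - k) * rWhitneyZ m 0 k ((a : ℤ) - (j : ℤ)))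
            = if j = a then rWhitney m r ℓ j else 0 := by
        intro j _
        rw [sum_range_one, rWhitneyZ_zero_row]
        by_cases hja : j = a
        · subst hja; simp
        · rw [if_neg (by intro hh; exact hja (by omega)), if_neg hja]
          ring
      rw [Finset.sum_congr rfl hcongr, Finset.sum_ite_eq' (range (ℓ + 1)) a, rWhitneyZ_coe]
      by_cases ha : a ∈ range (ℓ + 1)
      · rw [if_pos ha]
      · rw [if_neg ha, rWhitney_eq_zero m r ℓ a (by simpa using ha)]
    · rw [show rWhitneyZ m r ℓ t = 0 from if_neg (not_le.mpr ht)]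
      symm
      apply Finset.sum_eq_zero
      intro j hj
      apply Finset.sum_eq_zero
      intro k hk
      rw [show rWhitneyZ m 0 k (t - (j : ℤ)) = 0 from if_neg (by
        have : (0:ℤ) ≤ (j : ℤ) := Int.natCast_nonneg j
        omega), mul_zero]
  | succ n ih =>
    intro t
    rw [show n + 1 + ℓ = (n + ℓ) + 1 from by ring, rWhitneyZ_succ, ih, ih]
    rw [Finset.mul_sum, ← Finset.sum_add_distrib]
    refine Finset.sum_congr rfl fun j hj => ?_
    rw [Finset.mul_sum, ← Finset.sum_add_distrib]
    set c := rWhitney m r ℓ j with hc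
    set x := m * (j : R) + r with hx
    set s := t - (j : ℤ) with hs
    have hs1 : t - 1 - (j : ℤ) = s - 1 := by rw [hs]; ring
    rw [hs1]
    have step1 : ∀ k ∈ range (n + 1),
        c * (n.choose k : R) * x ^ (n - k) * rWhitneyZ m 0 k (s - 1)
          + (m * (t : R) + r) * (c * (n.choose k : R) * x ^ (n - k) * rWhitneyZ m 0 k s)
        = (c * (n.choose k : R) * x ^ (n - k) * rWhitneyZ m 0 (k + 1) s)
          + c * (n.choose k : R) * x ^ ((n - k) + 1) * rWhitneyZ m 0 k s := by
      intro k _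
      rw [rWhitneyZ_succ m 0 k s, hs, hx]
      push_cast
      ring
    rw [Finset.sum_congr rfl step1, Finset.sum_add_distrib]
    have hB : ∑ k ∈ range (n + 1), c * (n.choose k : R) * x ^ ((n - k) + 1) * rWhitneyZ m 0 k s
        = (∑ k ∈ range n, c * (n.choose (k + 1) : R) * x ^ (n - k) * rWhitneyZ m 0 (k + 1) s)
          + c * 1 * x ^ (n + 1) * rWhitneyZ m 0 0 s := by
      rw [Finset.sum_range_succ'
        (fun k => c * (n.choose k : R) * x ^ ((n - k) + 1) * rWhitneyZ m 0 k s) n]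
      congr 1
      · refine Finset.sum_congr rfl fun k hk => ?_
        have hk' : k < n := mem_range.mp hk
        rw [show n - (k + 1) + 1 = n - k from by omega]
      · simp
    have hG : ∑ k ∈ range (n + 1),
          c * (n.choose (k + 1) : R) * x ^ (n - k) * rWhitneyZ m 0 (k + 1) s
        = ∑ k ∈ range n, c * (n.choose (k + 1) : R) * x ^ (n - k) * rWhitneyZ m 0 (k + 1) s := by
      rw [sum_range_succ]
      simp [Nat.choose_succ_self]
    have hF : ∑ k ∈ range (n + 1 + 1),
          c * ((n + 1).choose k : R) * x ^ (n + 1 - k) * rWhitneyZ m 0 k s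
        = (∑ k ∈ range (n + 1),
            (c * (n.choose k : R) * x ^ (n - k) * rWhitneyZ m 0 (k + 1) s
              + c * (n.choose (k + 1) : R) * x ^ (n - k) * rWhitneyZ m 0 (k + 1) s))
          + c * 1 * x ^ (n + 1) * rWhitneyZ m 0 0 s := by
      rw [Finset.sum_range_succ'
        (fun k => c * ((n + 1).choose k : R) * x ^ (n + 1 - k) * rWhitneyZ m 0 k s) (n + 1)]
      congr 1
      · refine Finset.sum_congr rfl fun k hk => ?_
        rw [show n + 1 - (k + 1) = n - k from by omega, Nat.choose_succ_succ n k]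
        push_cast
        ring
      · simp
    rw [hB, hF, Finset.sum_add_distrib, hG]
    ring

end SpiveyAux

open Finset in
/-- Spivey-type formula for r-Dowling numbers. -/
theorem spivey_rDowling {R : Type*} [CommRing R] (m r : R) (n ℓ : ℕ) :
    rDowling m r (n + ℓ) =
      ∑ j ∈ Finset.range (ℓ + 1), ∑ k ∈ Finset.range (n + 1),
        rWhitney m r ℓ j * (Nat.choose n k : R) * (m * (j : R) + r) ^ (n - k) *
          rDowling m 0 k := by
  have h1 : rDowling m r (n + ℓ)
      = ∑ t ∈ range (n + ℓ + 1), ∑ j ∈ range (ℓ + 1), ∑ k ∈ range (n + 1),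
          rWhitney m r ℓ j * (n.choose k : R) * (m * (j : R) + r) ^ (n - k) *
            rWhitneyZ m 0 k ((t : ℤ) - (j : ℤ)) := by
    unfold rDowling
    refine Finset.sum_congr rfl fun t _ => ?_
    rw [← rWhitneyZ_coe m r (n + ℓ) t, keyA m r ℓ n (t : ℤ)]
  rw [h1, Finset.sum_comm]
  refine Finset.sum_congr rfl fun j hj => ?_
  rw [Finset.sum_comm]
  refine Finset.sum_congr rfl fun k hk => ?_
  rw [← Finset.mul_sum]
  congr 1
  have hj' : j ≤ ℓ := Nat.lt_succ_iff.mp (mem_range.mp hj)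
  have hk' : k ≤ n := Nat.lt_succ_iff.mp (mem_range.mp hk)
  rw [show n + ℓ + 1 = j + (n + ℓ + 1 - j) from by omega,
    sum_range_add' (fun t => rWhitneyZ m 0 k ((t : ℤ) - (j : ℤ))) j (n + ℓ + 1 - j)]
  have hz : ∑ t ∈ range j, rWhitneyZ m 0 k ((t : ℤ) - (j : ℤ)) = 0 := by
    apply Finset.sum_eq_zero
    intro t ht
    have ht' : (t : ℤ) < (j : ℤ) := by exact_mod_cast mem_range.mp ht
    exact if_neg (by omega)
  rw [hz, zero_add]
  have hcg : ∀ t ∈ range (n + ℓ + 1 - j),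
      rWhitneyZ m 0 k (((j + t : ℕ) : ℤ) - (j : ℤ)) = rWhitney m 0 k t := by
    intro t _
    rw [show ((j + t : ℕ) : ℤ) - (j : ℤ) = (t : ℤ) from by push_cast; ring, rWhitneyZ_coe]
  rw [Finset.sum_congr rfl hcg]
  exact sum_whitney_head m k _ (by omega)
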